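/- arXiv:2206.07235 — 4 statements merged into one kernel-verified Lean document; each statement's English description precedes it below -/
import Mathlib

section
/- For every real r with 0 < r < 1, ∫_0^∞ e^{(r−1)x} · (∫_{rx}^∞ (e^{−t}/t) dt) dx = log(r) / (r − 1). -/
open MeasureTheory Set Filter Real Topology

/-- `∫_0^∞ e^{-bx} dx = 1/b` for `b > 0`. -/
lemma aux_exp_int {b : ℝ} (hb : 0 < b) :
    ∫ x in Ioi (0:ℝ), Real.exp (-(b * x)) = b⁻¹ := by
  have h := integral_comp_mul_left_Ioi (fun t => Real.exp (-t)) 0 hb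
  simp only [mul_zero, integral_exp_neg_Ioi_zero, smul_eq_mul, mul_one] at h
  exact h

/-- Integrability of `s ↦ s⁻¹ (s + (1-r))⁻¹` on `(r, ∞)`. -/
lemma aux_int_on (r : ℝ) (hr0 : 0 < r) (hr1 : r < 1) :
    IntegrableOn (fun s : ℝ => s⁻¹ * (s + (1 - r))⁻¹) (Ioi r) := by
  have h2 : IntegrableOn (fun s : ℝ => s ^ (-2 : ℝ)) (Ioi r) :=
    integrableOn_Ioi_rpow_of_lt (by norm_num) hr0
  refine h2.mono' ?_ ?_
  · refine (Measurable.aestronglyMeasurable ?_)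
    exact (measurable_id.inv).mul ((measurable_id.add_const _).inv)
  · filter_upwards [ae_restrict_mem measurableSet_Ioi] with s hs
    have hs0 : 0 < s := hr0.trans hs
    have h1 : (0:ℝ) < s + (1 - r) := by linarith
    have hb : s⁻¹ * (s + (1 - r))⁻¹ ≤ s⁻¹ * s⁻¹ := by
      gcongr
      linarith
    have : s ^ (-2 : ℝ) = s⁻¹ * s⁻¹ := by
      rw [show (-2 : ℝ) = (-1) + (-1) by norm_num, Real.rpow_add hs0,
        Real.rpow_neg_one]
    rw [this, norm_mul, norm_inv, norm_inv, Real.norm_of_nonneg hs0.le,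
      Real.norm_of_nonneg h1.le]
    exact hb

/-- For every real `0 < r < 1`,
`∫_0^∞ e^{(r−1)x} (∫_{rx}^∞ (e^{−t}/t) dt) dx = log(r)/(r − 1)`. -/
theorem stmt_5 (r : ℝ) (hr0 : 0 < r) (hr1 : r < 1) :
    ∫ x in Ioi (0 : ℝ), Real.exp ((r - 1) * x) * (∫ t in Ioi (r * x), Real.exp (-t) / t)
      = Real.log r / (r - 1) := by
  have hc : (0:ℝ) < 1 - r := by linarith
  -- Step A: rewrite the integrand via the substitution t = x s.
  have stepA : ∀ x ∈ Ioi (0:ℝ),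
      Real.exp ((r - 1) * x) * (∫ t in Ioi (r * x), Real.exp (-t) / t)
        = ∫ s in Ioi r, Real.exp (-((s + (1 - r)) * x)) / s := by
    intro x hx
    have hx0 : (0:ℝ) < x := hx
    have hsub := integral_comp_mul_left_Ioi (fun t => Real.exp (-t) / t) r hx0
    -- hsub : ∫ s in Ioi r, exp (-(x*s))/(x*s) = x⁻¹ • ∫ t in Ioi (x*r), exp (-t)/t
    have h1 : (∫ t in Ioi (r * x), Real.exp (-t) / t)
        = x * ∫ s in Ioi r, Real.exp (-(x * s)) / (x * s) := by
      rw [hsub, mul_comm r x, smul_eq_mul, ← mul_assoc, mul_inv_cancel₀ hx0.ne', one_mul]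
    rw [h1, ← mul_assoc, ← MeasureTheory.integral_const_mul]
    refine setIntegral_congr_fun measurableSet_Ioi (fun s hs => ?_)
    have hs0 : (0:ℝ) < s := hr0.trans hs
    have he : Real.exp ((r-1)*x) * Real.exp (-(x*s)) = Real.exp (-((s+(1-r))*x)) := by
      rw [← Real.exp_add]; congr 1; ring
    rw [← he]
    field_simp
  rw [setIntegral_congr_fun measurableSet_Ioi stepA]
  -- Step B: Fubini.
  set f : ℝ → ℝ → ℝ := fun s x => Real.exp (-((s + (1 - r)) * x)) / s with hf_def
  have meas : AEStronglyMeasurable (Function.uncurry f)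
      ((volume.restrict (Ioi r)).prod (volume.restrict (Ioi 0))) := by
    apply Measurable.aestronglyMeasurable
    apply Measurable.div
    · exact (measurable_fst.add_const _).mul measurable_snd |>.neg.exp
    · exact measurable_fst
  have hint : Integrable (Function.uncurry f)
      ((volume.restrict (Ioi r)).prod (volume.restrict (Ioi 0))) := by
    rw [integrable_prod_iff meas]
    constructor
    · filter_upwards [ae_restrict_mem measurableSet_Ioi] with s hs
      have hs0 : (0:ℝ) < s := hr0.trans hs
      have hpos : (0:ℝ) < s + (1 - r) := by linarith
      have h := (exp_neg_integrableOn_Ioi 0 hpos).div_const s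
      refine h.congr (Filter.Eventually.of_forall fun x => ?_)
      simp only [hf_def, Function.uncurry]
      congr 2
      ring
    · refine (aux_int_on r hr0 hr1).congr ?_
      filter_upwards [ae_restrict_mem measurableSet_Ioi] with s hs
      have hs0 : (0:ℝ) < s := hr0.trans hs
      have hpos : (0:ℝ) < s + (1 - r) := by linarith
      have : ∀ x : ℝ, ‖f s x‖ = Real.exp (-((s + (1 - r)) * x)) / s := by
        intro x
        rw [Real.norm_of_nonneg (by positivity)]
      calc s⁻¹ * (s + (1 - r))⁻¹
          = (∫ x in Ioi (0:ℝ), Real.exp (-((s + (1 - r)) * x))) / s := by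
            rw [aux_exp_int hpos]; ring
        _ = ∫ x in Ioi (0:ℝ), Real.exp (-((s + (1 - r)) * x)) / s := (integral_div _ _).symm
        _ = ∫ x in Ioi (0:ℝ), ‖Function.uncurry f (s, x)‖ := by
            refine setIntegral_congr_fun measurableSet_Ioi (fun x _ => ?_)
            rw [show Function.uncurry f (s, x) = f s x from rfl, this x]
  have swap := integral_integral_swap hint
  rw [← swap]
  -- Step C: compute the inner x-integral.
  have stepC : ∀ s ∈ Ioi r, (∫ x in Ioi (0:ℝ), f s x) = s⁻¹ * (s + (1 - r))⁻¹ := by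
    intro s hs
    have hs0 : (0:ℝ) < s := hr0.trans hs
    have hpos : (0:ℝ) < s + (1 - r) := by linarith
    rw [hf_def]
    simp only
    rw [integral_div, aux_exp_int hpos]
    ring
  rw [setIntegral_congr_fun measurableSet_Ioi stepC]
  -- Step D: compute ∫_r^∞ 1/(s(s+1-r)) ds.
  set φ : ℝ → ℝ := fun s => (1 - r)⁻¹ * (Real.log s - Real.log (s + (1 - r))) with hφ_def
  have hderiv : ∀ s ∈ Ici r, HasDerivAt φ (s⁻¹ * (s + (1 - r))⁻¹) s := by
    intro s hs
    have hs0 : (0:ℝ) < s := lt_of_lt_of_le hr0 hs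
    have hpos : (0:ℝ) < s + (1 - r) := by linarith
    have h1 : HasDerivAt Real.log s⁻¹ s := Real.hasDerivAt_log hs0.ne'
    have h2 : HasDerivAt (fun s : ℝ => Real.log (s + (1 - r))) (s + (1 - r))⁻¹ s := by
      have := (Real.hasDerivAt_log hpos.ne').comp s
        ((hasDerivAt_id s).add_const (1 - r))
      simpa [Function.comp_def] using this
    have h3 : HasDerivAt (fun y => (1 - r)⁻¹ * (Real.log y - Real.log (y + (1 - r))))
        ((1 - r)⁻¹ * (s⁻¹ - (s + (1 - r))⁻¹)) s := ((h1.sub h2).const_mul ((1 - r)⁻¹))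
    convert h3 using 1
    field_simp
    ring
  have htend : Tendsto φ atTop (𝓝 0) := by
    have h1 : Tendsto (fun s : ℝ => (1 - r) / s) atTop (𝓝 0) :=
      tendsto_const_nhds.div_atTop tendsto_id
    have h0 : Tendsto (fun s : ℝ => 1 + (1 - r) / s) atTop (𝓝 1) := by
      simpa using (tendsto_const_nhds (x := (1:ℝ))).add h1
    have h2 : Tendsto (fun s : ℝ => Real.log (1 + (1 - r) / s)) atTop (𝓝 0) := by
      have := (Real.continuousAt_log (x := 1) one_ne_zero).tendsto.comp h0
      simpa [Real.log_one, Function.comp_def] using this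
    have h3 : Tendsto (fun s : ℝ => (1 - r)⁻¹ * -Real.log (1 + (1 - r) / s)) atTop (𝓝 0) := by
      have := (h2.neg).const_mul ((1 - r)⁻¹)
      simpa using this
    refine h3.congr' ?_
    filter_upwards [eventually_gt_atTop (0:ℝ)] with s hs0
    have hpos : (0:ℝ) < s + (1 - r) := by linarith
    rw [hφ_def]
    simp only
    rw [show (1 : ℝ) + (1 - r) / s = (s + (1 - r)) / s by field_simp,
      Real.log_div hpos.ne' hs0.ne']
    ring
  have key := integral_Ioi_of_hasDerivAt_of_tendsto' hderiv (aux_int_on r hr0 hr1) htend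
  rw [key, hφ_def]
  simp only
  rw [show r + (1 - r) = 1 by ring, Real.log_one]
  have h1r : r - 1 ≠ 0 := by linarith
  have h1r' : (1:ℝ) - r ≠ 0 := by linarith
  field_simp
  ring
end

section
/- Let X and Y be independent random variables, each exponentially distributed with rate 1, and let r ∈ (0,1). Then E[log(1 + X/(rY))] = log(r)/(r − 1). Equivalently, with p = 1 − r ∈ (0,1), E[log(1 + X/((1−p)Y))] = −log(1 − p)/p. -/
open MeasureTheory ProbabilityTheory

open Real Set Filter Topology
open scoped ENNReal

lemma stmt6_expMeasure_eq : expMeasure 1 = volume.withDensity (exponentialPDF 1) := rfl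

lemma stmt6_lint_exp {c : ℝ} (hc : 0 < c) :
    ∫⁻ x in Ioi (0:ℝ), ENNReal.ofReal (Real.exp (-(c * x))) = ENNReal.ofReal (1 / c) := by
  rw [← ofReal_integral_eq_lintegral_ofReal]
  · congr 1
    have h := integral_comp_mul_left_Ioi (fun x => Real.exp (-x)) 0 hc
    simp only [mul_zero, neg_mul] at h ⊢
    rw [h, integral_exp_neg_Ioi, neg_zero, Real.exp_zero, smul_eq_mul, mul_one, one_div]
  · have := exp_neg_integrableOn_Ioi 0 hc; simp only [neg_mul] at this; exact this
  · filter_upwards with x using (Real.exp_pos _).le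

lemma stmt6_pdf_eq {y : ℝ} (hy : 0 ≤ y) :
    exponentialPDF 1 y = ENNReal.ofReal (Real.exp (-y)) := by
  rw [exponentialPDF_of_nonneg hy, one_mul, one_mul]

lemma stmt6_expMeasure_Ioi {a : ℝ} (ha : 0 ≤ a) :
    expMeasure 1 (Ioi a) = ENNReal.ofReal (Real.exp (-a)) := by
  rw [stmt6_expMeasure_eq, withDensity_apply _ measurableSet_Ioi]
  have h1 : ∫⁻ x in Ioi a, exponentialPDF 1 x
      = ∫⁻ x in Ioi a, ENNReal.ofReal (Real.exp (-x)) :=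
    setLIntegral_congr_fun measurableSet_Ioi
      (fun x hx => stmt6_pdf_eq (le_trans ha (le_of_lt hx)))
  rw [h1, ← ofReal_integral_eq_lintegral_ofReal]
  · rw [integral_exp_neg_Ioi]
  · have := exp_neg_integrableOn_Ioi a one_pos; simp only [neg_mul, one_mul] at this; exact this
  · filter_upwards with x using (Real.exp_pos _).le

lemma stmt6_expMeasure_Iic : expMeasure 1 (Iic (0:ℝ)) = 0 := by
  have h1 : expMeasure 1 (Iio (0:ℝ)) = 0 := by
    rw [stmt6_expMeasure_eq, withDensity_apply _ measurableSet_Iio]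
    exact lintegral_exponentialPDF_of_nonpos le_rfl
  have h2 : expMeasure 1 ({(0:ℝ)}) = 0 := by
    rw [stmt6_expMeasure_eq, withDensity_apply _ (measurableSet_singleton _)]
    rw [Measure.restrict_eq_zero.mpr (by simp)]
    simp
  have h3 : Iic (0:ℝ) = Iio 0 ∪ {0} := by ext x; simp [le_iff_lt_or_eq]
  rw [h3]
  exact le_antisymm (le_trans (measure_union_le _ _) (by simp [h1, h2])) (zero_le)

lemma stmt6_ae_pos : ∀ᵐ y ∂(expMeasure 1), 0 < y := by
  rw [ae_iff]
  have h : {y : ℝ | ¬ 0 < y} = Iic 0 := by ext y; simp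
  rw [h, stmt6_expMeasure_Iic]

lemma stmt6_lintegral_expMeasure (g : ℝ → ℝ≥0∞) (hg : Measurable g) :
    ∫⁻ y, g y ∂(expMeasure 1)
      = ∫⁻ y in Ioi (0:ℝ), ENNReal.ofReal (Real.exp (-y)) * g y := by
  rw [stmt6_expMeasure_eq,
    lintegral_withDensity_eq_lintegral_mul _ (show Measurable (exponentialPDF 1) from (measurable_exponentialPDFReal 1).ennreal_ofReal) hg]
  simp only [Pi.mul_apply]
  rw [← lintegral_add_compl (fun y => exponentialPDF 1 y * g y) (measurableSet_Ioi (a := (0:ℝ)))]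
  have hc : ∫⁻ y in (Ioi (0:ℝ))ᶜ, exponentialPDF 1 y * g y = 0 := by
    rw [compl_Ioi]
    have h3 : Iic (0:ℝ) = Iio 0 ∪ {0} := by ext x; simp [le_iff_lt_or_eq]
    rw [h3]
    refine le_antisymm (le_trans (lintegral_union_le _ _ _) ?_) (zero_le)
    have hA : ∫⁻ y in Iio (0:ℝ), exponentialPDF 1 y * g y = 0 := by
      rw [setLIntegral_congr_fun measurableSet_Iio
        (fun y (hy : y ∈ Iio (0:ℝ)) => by rw [exponentialPDF_of_neg hy.out, zero_mul])]
      simp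
    have hB : ∫⁻ y in ({0}: Set ℝ), exponentialPDF 1 y * g y = 0 := by
      rw [Measure.restrict_eq_zero.mpr (by simp), lintegral_zero_measure]
    simp [hA, hB]
  rw [hc, add_zero]
  exact setLIntegral_congr_fun measurableSet_Ioi
    (fun y hy => by rw [stmt6_pdf_eq (le_of_lt hy)])

lemma stmt6_integrable_inv {r : ℝ} (hr0 : 0 < r) (hr1 : r < 1) :
    IntegrableOn (fun t : ℝ => (1 - r + r * Real.exp t)⁻¹) (Ioi 0) := by
  have hpos : ∀ t : ℝ, 0 < 1 - r + r * Real.exp t := fun t => by nlinarith [Real.exp_pos t]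
  refine Integrable.mono ((exp_neg_integrableOn_Ioi 0 one_pos).const_mul r⁻¹) ?_ ?_
  · exact ((continuous_const.add (continuous_const.mul Real.continuous_exp)).inv₀
      fun t => ne_of_gt (hpos t)).aestronglyMeasurable
  · filter_upwards with t
    have het := Real.exp_pos t
    rw [Real.norm_eq_abs, Real.norm_eq_abs, abs_of_pos (inv_pos.mpr (hpos t)),
      abs_of_pos (by positivity : (0:ℝ) < r⁻¹ * Real.exp (-1 * t))]
    rw [show -1 * t = -t by ring, Real.exp_neg]
    rw [← mul_inv]
    exact inv_anti₀ (by positivity) (by nlinarith)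

lemma stmt6_integral_inv {r : ℝ} (hr0 : 0 < r) (hr1 : r < 1) :
    ∫ t in Ioi (0:ℝ), (1 - r + r * Real.exp t)⁻¹ = Real.log r / (r - 1) := by
  have h1r : 0 < 1 - r := by linarith
  have hpos : ∀ t : ℝ, 0 < 1 - r + r * Real.exp t := fun t => by nlinarith [Real.exp_pos t]
  set F : ℝ → ℝ := fun t => (1 - r)⁻¹ * (t - Real.log (1 - r + r * Real.exp t)) with hF
  have hderiv : ∀ t ∈ Ioi (0:ℝ), HasDerivAt F ((1 - r + r * Real.exp t)⁻¹) t := by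
    intro t _
    have h1 : HasDerivAt (fun t : ℝ => 1 - r + r * Real.exp t) (r * Real.exp t) t :=
      ((Real.hasDerivAt_exp t).const_mul r).const_add (1 - r)
    have h2 := ((hasDerivAt_id t).sub (h1.log (ne_of_gt (hpos t)))).const_mul ((1 - r)⁻¹)
    refine h2.congr_deriv ?_
    have := hpos t
    have h1r' : (1:ℝ) - r ≠ 0 := ne_of_gt h1r
    field_simp
    ring
  have hFeq : ∀ t, F t = (1 - r)⁻¹ * (- Real.log (r + (1 - r) * Real.exp (-t))) := by
    intro t
    have h2 : 0 < r + (1 - r) * Real.exp (-t) := by nlinarith [Real.exp_pos (-t)]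
    have hee : Real.exp t * Real.exp (-t) = 1 := by rw [← Real.exp_add]; simp
    have h3 : 1 - r + r * Real.exp t = Real.exp t * (r + (1 - r) * Real.exp (-t)) := by
      linear_combination (r - 1) * hee
    rw [hF]
    simp only
    rw [h3, Real.log_mul (Real.exp_ne_zero t) (ne_of_gt h2), Real.log_exp]
    ring
  have hlim : Tendsto F atTop (𝓝 ((1 - r)⁻¹ * (- Real.log r))) := by
    have ht0 : Tendsto (fun t : ℝ => r + (1 - r) * Real.exp (-t)) atTop (𝓝 (r + (1 - r) * 0)) :=
      tendsto_const_nhds.add (tendsto_const_nhds.mul (Real.tendsto_exp_neg_atTop_nhds_zero))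
    rw [mul_zero, add_zero] at ht0
    have hlog : Tendsto (fun t : ℝ => Real.log (r + (1 - r) * Real.exp (-t))) atTop
        (𝓝 (Real.log r)) := ((Real.continuousAt_log (ne_of_gt hr0)).tendsto).comp ht0
    have := (hlog.neg).const_mul ((1 - r)⁻¹)
    refine this.congr fun t => (hFeq t).symm
  have hcont : ContinuousWithinAt F (Ici 0) 0 := by
    refine Continuous.continuousWithinAt ?_
    exact continuous_const.mul (continuous_id.sub
      ((continuous_const.add (continuous_const.mul Real.continuous_exp)).log
        fun t => ne_of_gt (hpos t)))
  rw [integral_Ioi_of_hasDerivAt_of_tendsto hcont hderiv (stmt6_integrable_inv hr0 hr1) hlim]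
  have hF0 : F 0 = 0 := by
    rw [hF]; simp
  rw [hF0, sub_zero]
  have hr1' : r - 1 ≠ 0 := by linarith
  field_simp
  ring

/-- If `X` and `Y` are independent `Exp(1)` random variables and
`r ∈ (0,1)`, then `E[log(1 + X/(rY))] = log(r)/(r − 1)`; equivalently, with
`p = 1 − r ∈ (0,1)`, `E[log(1 + X/((1−p)Y))] = −log(1 − p)/p`. -/
theorem stmt_6 {Ω : Type*} [MeasureSpace Ω] [IsProbabilityMeasure (ℙ : Measure Ω)]
    (X Y : Ω → ℝ) (hX : Measurable X) (hY : Measurable Y)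
    (hindep : IndepFun X Y ℙ)
    (hXd : Measure.map X ℙ = expMeasure 1) (hYd : Measure.map Y ℙ = expMeasure 1)
    (r : ℝ) (hr0 : 0 < r) (hr1 : r < 1) :
    ∫ ω, Real.log (1 + X ω / (r * Y ω)) = Real.log r / (r - 1) := by
  have hPexp : IsProbabilityMeasure (expMeasure 1) := isProbabilityMeasure_expMeasure one_pos
  have hXpos : ∀ᵐ ω, 0 < X ω := by
    rw [ae_iff]
    have h : {ω | ¬ 0 < X ω} = X ⁻¹' (Iic 0) := by ext ω; simp
    rw [h, ← Measure.map_apply hX measurableSet_Iic, hXd, stmt6_expMeasure_Iic]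
  have hYpos : ∀ᵐ ω, 0 < Y ω := by
    rw [ae_iff]
    have h : {ω | ¬ 0 < Y ω} = Y ⁻¹' (Iic 0) := by ext ω; simp
    rw [h, ← Measure.map_apply hY measurableSet_Iic, hYd, stmt6_expMeasure_Iic]
  set f : Ω → ℝ := fun ω => Real.log (1 + X ω / (r * Y ω)) with hf
  have hfm : Measurable f :=
    Real.measurable_log.comp (measurable_const.add (hX.div (measurable_const.mul hY)))
  have hfnn : 0 ≤ᵐ[(ℙ : Measure Ω)] f := by
    filter_upwards [hXpos, hYpos] with ω hx hy
    have h1 : 0 ≤ X ω / (r * Y ω) := div_nonneg hx.le (by positivity)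
    exact Real.log_nonneg (by linarith)
  have hmap : Measure.map (fun ω => (Y ω, X ω)) ℙ = (expMeasure 1).prod (expMeasure 1) := by
    have h := (indepFun_iff_map_prod_eq_prod_map_map hY.aemeasurable hX.aemeasurable).mp
      hindep.symm
    rw [hYd, hXd] at h
    exact h
  have prob_gt : ∀ c : ℝ, 0 < c →
      (ℙ : Measure Ω) {ω | c * Y ω < X ω} = ENNReal.ofReal (1 / (1 + c)) := by
    intro c hc
    have hs : MeasurableSet {p : ℝ × ℝ | c * p.1 < p.2} :=
      measurableSet_lt (measurable_fst.const_mul c) measurable_snd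
    have hpre : {ω | c * Y ω < X ω} = (fun ω => (Y ω, X ω)) ⁻¹' {p | c * p.1 < p.2} := rfl
    rw [hpre, ← Measure.map_apply (hY.prodMk hX) hs, hmap, Measure.prod_apply hs]
    have hsec : ∀ y : ℝ, (Prod.mk y ⁻¹' {p : ℝ × ℝ | c * p.1 < p.2}) = Ioi (c * y) :=
      fun y => rfl
    calc ∫⁻ y, expMeasure 1 (Prod.mk y ⁻¹' {p : ℝ × ℝ | c * p.1 < p.2}) ∂(expMeasure 1)
        = ∫⁻ y, ENNReal.ofReal (Real.exp (-(c * y))) ∂(expMeasure 1) := by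
          refine lintegral_congr_ae ?_
          filter_upwards [stmt6_ae_pos] with y hy
          rw [hsec y, stmt6_expMeasure_Ioi (by positivity)]
      _ = ∫⁻ y in Ioi (0:ℝ),
            ENNReal.ofReal (Real.exp (-y)) * ENNReal.ofReal (Real.exp (-(c * y))) :=
          stmt6_lintegral_expMeasure _
            ((Real.measurable_exp.comp ((measurable_id.const_mul c).neg)).ennreal_ofReal)
      _ = ∫⁻ y in Ioi (0:ℝ), ENNReal.ofReal (Real.exp (-((1 + c) * y))) := by
          refine lintegral_congr fun y => ?_
          rw [← ENNReal.ofReal_mul (Real.exp_pos _).le, ← Real.exp_add]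
          ring_nf
      _ = ENNReal.ofReal (1 / (1 + c)) := stmt6_lint_exp (by linarith)
  rw [integral_eq_lintegral_of_nonneg_ae hfnn hfm.aestronglyMeasurable]
  rw [lintegral_eq_lintegral_meas_lt ℙ hfnn hfm.aemeasurable]
  have hkey : ∀ t ∈ Ioi (0:ℝ),
      (ℙ : Measure Ω) {a | t < f a} = ENNReal.ofReal ((1 - r + r * Real.exp t)⁻¹) := by
    intro t ht
    have h1e : 1 < Real.exp t := by
      rw [← Real.exp_zero]; exact Real.exp_lt_exp.mpr ht
    have hc : 0 < r * (Real.exp t - 1) := by nlinarith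
    have hsets : {a | t < f a} =ᵐ[(ℙ : Measure Ω)]
        {ω | (r * (Real.exp t - 1)) * Y ω < X ω} := by
      filter_upwards [hXpos, hYpos] with ω hx hy
      simp only [eq_iff_iff, Set.mem_setOf_eq]
      have hry : 0 < r * Y ω := by positivity
      have harg : 0 < 1 + X ω / (r * Y ω) := by positivity
      show t < Real.log (1 + X ω / (r * Y ω)) ↔ r * (Real.exp t - 1) * Y ω < X ω
      rw [Real.lt_log_iff_exp_lt harg, ← sub_lt_iff_lt_add', lt_div_iff₀ hry,
        show (Real.exp t - 1) * (r * Y ω) = r * (Real.exp t - 1) * Y ω from by ring]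
    rw [measure_congr hsets, prob_gt _ hc]
    congr 1
    rw [one_div]
    congr 1
    ring
  rw [setLIntegral_congr_fun measurableSet_Ioi hkey]
  rw [← ofReal_integral_eq_lintegral_ofReal (stmt6_integrable_inv hr0 hr1)
    (by filter_upwards with t using (inv_pos.mpr (by nlinarith [Real.exp_pos t])).le)]
  rw [stmt6_integral_inv hr0 hr1]
  exact ENNReal.toReal_ofReal
    (div_nonneg_of_nonpos (Real.log_nonpos hr0.le hr1.le) (by linarith))
end

section
/- For every real d, (∫_d^∞ (x − d) · e^{−x}/(1 + e^{−x})^2 dx) / (∫_d^∞ e^{−x}/(1 + e^{−x})^2 dx) = log(1 + e^{−d}) / (1 − 1/(1 + e^{−d})), i.e. the conditional expectation E[X − d | X ≥ d] for a standard logistic random variable X equals (1 + e^d) · log(1 + e^{−d}). -/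
open MeasureTheory Set Filter Real

private lemma one_add_exp_pos (x : ℝ) : (0:ℝ) < 1 + Real.exp (-x) := by positivity

private lemma one_add_exp_ne (x : ℝ) : (1:ℝ) + Real.exp (-x) ≠ 0 := (one_add_exp_pos x).ne'

/-- derivative of `1/(1+e^{-x})` is the logistic density. -/
private lemma hasDeriv_den (x : ℝ) :
    HasDerivAt (fun x : ℝ => 1 / (1 + Real.exp (-x)))
      (Real.exp (-x) / (1 + Real.exp (-x)) ^ 2) x := by
  have h1 : HasDerivAt (fun x : ℝ => 1 + Real.exp (-x)) (-Real.exp (-x)) x := by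
    simpa using ((Real.hasDerivAt_exp (-x)).comp x ((hasDerivAt_id x).neg)).const_add 1
  have h2 := h1.inv (one_add_exp_ne x)
  simpa [div_eq_mul_inv, neg_neg, one_div] using h2.const_mul (1:ℝ)

private lemma tendsto_exp_neg : Tendsto (fun x : ℝ => Real.exp (-x)) atTop (nhds 0) := by
  simpa using Real.tendsto_exp_comp_nhds_zero.mpr tendsto_neg_atTop_atBot

private lemma tendsto_den : Tendsto (fun x : ℝ => 1 / (1 + Real.exp (-x))) atTop (nhds 1) := by
  have h : Tendsto (fun x : ℝ => 1 + Real.exp (-x)) atTop (nhds 1) := by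
    simpa using tendsto_const_nhds.add tendsto_exp_neg
  simpa using h.inv₀ (by norm_num)

private lemma den_integral (d : ℝ) :
    ∫ x in Ioi d, Real.exp (-x) / (1 + Real.exp (-x)) ^ 2
      = 1 - 1 / (1 + Real.exp (-d)) := by
  exact integral_Ioi_of_hasDerivAt_of_nonneg' (fun x _ => hasDeriv_den x)
    (fun x _ => by positivity) tendsto_den

/-- antiderivative for the numerator -/
private lemma hasDeriv_num (d x : ℝ) :
    HasDerivAt (fun x : ℝ => (x - d) / (1 + Real.exp (-x)) - Real.log (1 + Real.exp x))
      ((x - d) * (Real.exp (-x) / (1 + Real.exp (-x)) ^ 2)) x := by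
  have h1 : HasDerivAt (fun x : ℝ => (x - d) * (1 / (1 + Real.exp (-x))))
      (1 * (1 / (1 + Real.exp (-x))) + (x - d) * (Real.exp (-x) / (1 + Real.exp (-x)) ^ 2)) x :=
    HasDerivAt.mul (by simpa using (hasDerivAt_id x).sub_const d) (hasDeriv_den x)
  have h2 : HasDerivAt (fun x : ℝ => Real.log (1 + Real.exp x))
      (Real.exp x / (1 + Real.exp x)) x := by
    have hb : HasDerivAt (fun x : ℝ => 1 + Real.exp x) (Real.exp x) x := by
      simpa using (Real.hasDerivAt_exp x).const_add 1
    exact hb.log (by positivity)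
  have h3 := h1.sub h2
  have key : 1 * (1 / (1 + Real.exp (-x))) + (x - d) * (Real.exp (-x) / (1 + Real.exp (-x)) ^ 2)
      - Real.exp x / (1 + Real.exp x)
      = (x - d) * (Real.exp (-x) / (1 + Real.exp (-x)) ^ 2) := by
    have he : Real.exp (-x) = 1 / Real.exp x := by
      rw [Real.exp_neg]; ring
    have hx : Real.exp x ≠ 0 := (Real.exp_pos x).ne'
    rw [he]
    field_simp
    ring
  have h4 : (fun x : ℝ => (x - d) / (1 + Real.exp (-x)) - Real.log (1 + Real.exp x))
      = ((fun x : ℝ => (x - d) * (1 / (1 + Real.exp (-x)))) - fun x => Real.log (1 + Real.exp x)) := by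
    funext y; simp only [Pi.sub_apply, mul_one_div]
  rw [h4]; exact h3.congr_deriv key

private lemma tendsto_num (d : ℝ) :
    Tendsto (fun x : ℝ => (x - d) / (1 + Real.exp (-x)) - Real.log (1 + Real.exp x))
      atTop (nhds (-d)) := by
  have key : ∀ x : ℝ, (x - d) / (1 + Real.exp (-x)) - Real.log (1 + Real.exp x)
      = -d - ((x - d) * Real.exp (-x)) / (1 + Real.exp (-x)) - Real.log (1 + Real.exp (-x)) := by
    intro x
    have h : Real.log (1 + Real.exp x) = x + Real.log (1 + Real.exp (-x)) := by
      have he : (1 + Real.exp x) = Real.exp x * (1 + Real.exp (-x)) := by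
        rw [mul_add, ← Real.exp_add]; simp [add_comm]
      rw [he, Real.log_mul (Real.exp_pos x).ne' (one_add_exp_ne x), Real.log_exp]
    rw [h]
    field_simp
    ring
  simp only [key]
  have h1 : Tendsto (fun x : ℝ => (x - d) * Real.exp (-x)) atTop (nhds 0) := by
    have := Real.tendsto_pow_mul_exp_neg_atTop_nhds_zero 1
    simp only [pow_one] at this
    have h2 : Tendsto (fun x : ℝ => x * Real.exp (-x) - d * Real.exp (-x)) atTop (nhds 0) := by
      simpa using this.sub (tendsto_exp_neg.const_mul d)
    refine h2.congr fun x => by ring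
  have hden : Tendsto (fun x : ℝ => 1 + Real.exp (-x)) atTop (nhds 1) := by
    simpa using tendsto_const_nhds.add tendsto_exp_neg
  have h2 : Tendsto (fun x : ℝ => ((x - d) * Real.exp (-x)) / (1 + Real.exp (-x)))
      atTop (nhds 0) := by
    simpa [Pi.div_def] using h1.div hden (by norm_num)
  have h3 : Tendsto (fun x : ℝ => Real.log (1 + Real.exp (-x))) atTop (nhds 0) := by
    have := (Real.continuousAt_log (x := (1:ℝ)) (by norm_num)).tendsto.comp hden
    simpa [Function.comp_def] using this
  simpa using (tendsto_const_nhds (x := -d) (f := atTop)).sub h2 |>.sub h3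

private lemma num_integral (d : ℝ) :
    ∫ x in Ioi d, (x - d) * (Real.exp (-x) / (1 + Real.exp (-x)) ^ 2)
      = Real.log (1 + Real.exp (-d)) := by
  have h := integral_Ioi_of_hasDerivAt_of_nonneg
    (g := fun x : ℝ => (x - d) / (1 + Real.exp (-x)) - Real.log (1 + Real.exp x))
    (g' := fun x => (x - d) * (Real.exp (-x) / (1 + Real.exp (-x)) ^ 2))
    ((hasDeriv_num d d).continuousAt.continuousWithinAt)
    (fun x _ => hasDeriv_num d x)
    (fun x hx => by
      have h1 : 0 ≤ x - d := by simp at hx; linarith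
      positivity)
    (tendsto_num d)
  rw [h]
  have hlog : Real.log (1 + Real.exp d) = d + Real.log (1 + Real.exp (-d)) := by
    have he : (1 + Real.exp d) = Real.exp d * (1 + Real.exp (-d)) := by
      rw [mul_add, ← Real.exp_add]; simp [add_comm]
    rw [he, Real.log_mul (Real.exp_pos d).ne' (one_add_exp_ne d), Real.log_exp]
  simp only [sub_self, zero_div]
  rw [hlog]
  ring

/-- For every real `d`, the conditional expectation `E[X − d | X ≥ d]`
of a standard logistic random variable, computed as the ratio of integrals of its density,
equals `log(1 + e^{−d})/(1 − 1/(1 + e^{−d}))`, i.e. `(1 + e^d) log(1 + e^{−d})`. -/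
theorem stmt_9 (d : ℝ) :
    (∫ x in Ioi d, (x - d) * (Real.exp (-x) / (1 + Real.exp (-x)) ^ 2)) /
        (∫ x in Ioi d, Real.exp (-x) / (1 + Real.exp (-x)) ^ 2)
      = Real.log (1 + Real.exp (-d)) / (1 - 1 / (1 + Real.exp (-d))) ∧
    Real.log (1 + Real.exp (-d)) / (1 - 1 / (1 + Real.exp (-d)))
      = (1 + Real.exp d) * Real.log (1 + Real.exp (-d)) := by
  constructor
  · rw [num_integral d, den_integral d]
  · have h1 : (1:ℝ) - 1 / (1 + Real.exp (-d)) = Real.exp (-d) / (1 + Real.exp (-d)) := by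
      field_simp
      ring
    rw [h1, div_div_eq_mul_div, Real.exp_neg]
    have hx : Real.exp d ≠ 0 := (Real.exp_pos d).ne'
    field_simp
    ring
end

section
/- Let N ≥ 2, ℓ ∈ ℝ^N, g > 0, and fix an index i. Let M = max_{1 ≤ j ≤ N} ℓ_j. Define the perturbed logits q ∈ ℝ^N by q_i = ℓ_i + (M − ℓ_i) = M and, for k ≠ i, q_k = ℓ_k − max(ℓ_k + g − M, 0). Then q_i − q_k ≥ g for every k ≠ i; in particular i is the unique argmax of q. -/
/-- Correctness of the Gapped Straight-Through perturbations: with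
`M = max_j ℓ_j`, the perturbed logits `q_i = ℓ_i + (M − ℓ_i)` (the `m₁` perturbation) and
`q_k = ℓ_k − max(ℓ_k + g − M, 0)` for `k ≠ i` (the `m₂` perturbation) satisfy
`q_i − q_k ≥ g` for every `k ≠ i`; in particular `i` is the unique argmax of `q`. -/
theorem stmt_15 {N : ℕ} (hN : 2 ≤ N) (ℓ : Fin N → ℝ) (g : ℝ) (hg : 0 < g) (i : Fin N)
    (M : ℝ)
    (hM : M = Finset.univ.sup'
      (Finset.univ_nonempty_iff.mpr (Fin.pos_iff_nonempty.mp (by omega))) ℓ)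
    (q : Fin N → ℝ)
    (hq : ∀ k, q k = if k = i then ℓ i + (M - ℓ i) else ℓ k - max (ℓ k + g - M) 0) :
    ∀ k, k ≠ i → g ≤ q i - q k ∧ q k < q i := by
  intro k hk
  have hqi : q i = M := by rw [hq i]; simp
  have hqk : q k = ℓ k - max (ℓ k + g - M) 0 := by rw [hq k]; simp [hk]
  have hle : ℓ k ≤ M := by rw [hM]; exact Finset.le_sup' ℓ (Finset.mem_univ k)
  have key : g ≤ q i - q k := by
    rw [hqi, hqk]
    rcases le_or_gt 0 (ℓ k + g - M) with h | h
    · rw [max_eq_left h]; linarith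
    · rw [max_eq_right h.le]; linarith
  exact ⟨key, by linarith⟩
end
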